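/- Let n = 2^a with a ≥ 2, and let s be an odd positive integer such that s divides the central binomial coefficient C(n, n/2) and s divides C(n, k) for some k with 1 ≤ k ≤ n−1 and k ≠ n/2. Then the cyclotomic polynomial Φ_{4s}(t) divides the descent set polynomial Q_n(t). -/

import Mathlib

/-- The descent set of a permutation of `Fin n`, as a subset of `[n-1] = {1,…,n-1}`
(1-based positions): `i` is a descent if `π(i) > π(i+1)`. -/
def descentSet (n : ℕ) (π : Equiv.Perm (Fin n)) : Finset ℕ :=
  (Finset.Ico 1 n).filter fun i => ∀ h : i < n, π ⟨i, h⟩ < π ⟨i - 1, by omega⟩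

/-- The descent set statistic `β_n(S)`: the number of permutations of `{1,…,n}`
with descent set `S`. -/
def beta (n : ℕ) (S : Finset ℕ) : ℕ :=
  (Finset.univ.filter fun π : Equiv.Perm (Fin n) => descentSet n π = S).card

/-- The descent set polynomial `Q_n(t) = ∑_{S ⊆ [n-1]} t^{β_n(S)}`. -/
noncomputable def Q (n : ℕ) : Polynomial ℤ :=
  ∑ S ∈ (Finset.Ico 1 n).powerset, Polynomial.X ^ beta n S


lemma mem_descentSet_iff {n : ℕ} (π : Equiv.Perm (Fin n)) {i : ℕ} (h1 : 1 ≤ i) (hn : i < n) :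
    i ∈ descentSet n π ↔ π ⟨i, hn⟩ < π ⟨i - 1, by omega⟩ := by
  simp [descentSet, Finset.mem_filter, Finset.mem_Ico, h1, hn]

lemma descentSet_subset {n : ℕ} (π : Equiv.Perm (Fin n)) : descentSet n π ⊆ Finset.Ico 1 n :=
  Finset.filter_subset _ _

lemma descentSet_one (n : ℕ) : descentSet n (1 : Equiv.Perm (Fin n)) = ∅ := by
  ext i
  simp only [descentSet, Finset.mem_filter, Finset.mem_Ico, Finset.notMem_empty, iff_false]
  rintro ⟨⟨h1, hn⟩, h⟩
  have := h hn
  simp only [Equiv.Perm.coe_one, id_eq] at this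
  rw [Fin.lt_def] at this
  simp only [] at this
  omega

lemma eq_one_of_descentSet_empty {n : ℕ} (π : Equiv.Perm (Fin n)) (h : descentSet n π = ∅) :
    π = 1 := by
  rcases Nat.eq_zero_or_pos n with rfl | hn
  · exact Subsingleton.elim _ _
  obtain ⟨N, rfl⟩ : ∃ N, n = N + 1 := ⟨n - 1, by omega⟩
  have hmono : StrictMono π := by
    rw [Fin.strictMono_iff_lt_succ]
    intro i
    have hi : (i : ℕ) + 1 ∉ descentSet (N + 1) π := by rw [h]; exact Finset.notMem_empty _
    rw [mem_descentSet_iff π (by omega) (by omega)] at hi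
    have hsucc : (⟨(i : ℕ) + 1, by omega⟩ : Fin (N + 1)) = i.succ := rfl
    have hcast : (⟨(i : ℕ) + 1 - 1, by omega⟩ : Fin (N + 1)) = i.castSucc := by
      apply Fin.ext; simp
    rw [hsucc, hcast] at hi
    rcases lt_or_eq_of_le (not_lt.mp hi) with h' | h'
    · exact h'
    · exact absurd (π.injective h') (by simp [Fin.ext_iff])
  ext i
  have : (StrictMono.orderIsoOfSurjective π hmono π.surjective) i = i := by
    rw [Subsingleton.elim (StrictMono.orderIsoOfSurjective π hmono π.surjective) (OrderIso.refl _)]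
    rfl
  have h2 : π i = i := this
  simp [h2]

lemma beta_empty (n : ℕ) : beta n ∅ = 1 := by
  rw [beta]
  rw [show (Finset.univ.filter fun π : Equiv.Perm (Fin n) => descentSet n π = ∅) = {1} from ?_]
  · exact Finset.card_singleton _
  ext π
  simp only [Finset.mem_filter, Finset.mem_univ, true_and, Finset.mem_singleton]
  exact ⟨eq_one_of_descentSet_empty π, fun h => h ▸ descentSet_one n⟩
section Assemble

variable {n m : ℕ}

lemma card_compl_eq {A : Finset (Fin n)} (hA : A.card = m) : Aᶜ.card = n - m := by
  rw [Finset.card_compl, hA, Fintype.card_fin]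

/-- The function underlying `assemble`. -/
def assembleFun (hmn : m < n) (A : Finset (Fin n)) (hA : A.card = m)
    (σ : Equiv.Perm (Fin m)) (τ : Equiv.Perm (Fin (n - m))) : Fin n → Fin n := fun i =>
  if h : (i : ℕ) < m then A.orderEmbOfFin hA (σ ⟨i, h⟩)
  else Aᶜ.orderEmbOfFin (card_compl_eq hA) (τ ⟨(i : ℕ) - m, by omega⟩)

lemma assembleFun_injective (hmn : m < n) (A : Finset (Fin n)) (hA : A.card = m)
    (σ : Equiv.Perm (Fin m)) (τ : Equiv.Perm (Fin (n - m))) :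
    Function.Injective (assembleFun hmn A hA σ τ) := by
  intro i j hij
  unfold assembleFun at hij
  by_cases hi : (i : ℕ) < m <;> by_cases hj : (j : ℕ) < m
  · rw [dif_pos hi, dif_pos hj] at hij
    have := σ.injective ((A.orderEmbOfFin hA).injective hij)
    rw [Fin.mk.injEq] at this
    exact Fin.ext this
  · rw [dif_pos hi, dif_neg hj] at hij
    exfalso
    have h1 : A.orderEmbOfFin hA (σ ⟨i, hi⟩) ∈ A := Finset.orderEmbOfFin_mem _ _ _
    have h2 : Aᶜ.orderEmbOfFin (card_compl_eq hA) (τ ⟨(j:ℕ) - m, by omega⟩) ∈ Aᶜ :=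
      Finset.orderEmbOfFin_mem _ _ _
    rw [hij] at h1
    exact (Finset.mem_compl.mp h2) h1
  · rw [dif_neg hi, dif_pos hj] at hij
    exfalso
    have h1 : A.orderEmbOfFin hA (σ ⟨j, hj⟩) ∈ A := Finset.orderEmbOfFin_mem _ _ _
    have h2 : Aᶜ.orderEmbOfFin (card_compl_eq hA) (τ ⟨(i:ℕ) - m, by omega⟩) ∈ Aᶜ :=
      Finset.orderEmbOfFin_mem _ _ _
    rw [hij] at h2
    exact (Finset.mem_compl.mp h2) h1
  · rw [dif_neg hi, dif_neg hj] at hij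
    have := τ.injective ((Aᶜ.orderEmbOfFin (card_compl_eq hA)).injective hij)
    rw [Fin.mk.injEq] at this
    have hi' := i.2
    have hj' := j.2
    exact Fin.ext (by omega)

/-- Assemble a permutation of `Fin n` from an `m`-subset `A` (the values on positions `< m`),
a pattern `σ` for the first block and a pattern `τ` for the second block. -/
noncomputable def assemble (hmn : m < n) (A : Finset (Fin n)) (hA : A.card = m)
    (σ : Equiv.Perm (Fin m)) (τ : Equiv.Perm (Fin (n - m))) : Equiv.Perm (Fin n) :=
  Equiv.ofBijective _
    (Finite.injective_iff_bijective.mp (assembleFun_injective hmn A hA σ τ))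

lemma assemble_apply_lt (hmn : m < n) (A : Finset (Fin n)) (hA : A.card = m)
    (σ : Equiv.Perm (Fin m)) (τ : Equiv.Perm (Fin (n - m))) (i : Fin n) (h : (i : ℕ) < m) :
    assemble hmn A hA σ τ i = A.orderEmbOfFin hA (σ ⟨i, h⟩) := by
  show assembleFun hmn A hA σ τ i = _
  rw [assembleFun, dif_pos h]

lemma assemble_apply_ge (hmn : m < n) (A : Finset (Fin n)) (hA : A.card = m)
    (σ : Equiv.Perm (Fin m)) (τ : Equiv.Perm (Fin (n - m))) (i : Fin n) (h : ¬ (i : ℕ) < m) :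
    assemble hmn A hA σ τ i
      = Aᶜ.orderEmbOfFin (card_compl_eq hA) (τ ⟨(i : ℕ) - m, by omega⟩) := by
  show assembleFun hmn A hA σ τ i = _
  rw [assembleFun, dif_neg h]

lemma descentSet_assemble_lower (hmn : m < n) (A : Finset (Fin n)) (hA : A.card = m)
    (σ : Equiv.Perm (Fin m)) (τ : Equiv.Perm (Fin (n - m))) {i : ℕ} (h1 : 1 ≤ i) (him : i < m) :
    (i ∈ descentSet n (assemble hmn A hA σ τ) ↔ i ∈ descentSet m σ) := by
  have hin : i < n := lt_trans him hmn
  rw [mem_descentSet_iff _ h1 hin, mem_descentSet_iff _ h1 him]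
  rw [assemble_apply_lt hmn A hA σ τ ⟨i, hin⟩ him,
    assemble_apply_lt hmn A hA σ τ ⟨i - 1, by omega⟩ (by simp only []; omega)]
  rw [OrderEmbedding.lt_iff_lt]

lemma descentSet_assemble_upper (hmn : m < n) (A : Finset (Fin n)) (hA : A.card = m)
    (σ : Equiv.Perm (Fin m)) (τ : Equiv.Perm (Fin (n - m))) {i : ℕ} (him : m < i) (hin : i < n) :
    (i ∈ descentSet n (assemble hmn A hA σ τ) ↔ i - m ∈ descentSet (n - m) τ) := by
  rw [mem_descentSet_iff _ (by omega) hin, mem_descentSet_iff _ (by omega) (show i - m < n - m by omega)]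
  rw [assemble_apply_ge hmn A hA σ τ ⟨i, hin⟩ (by simp only []; omega),
    assemble_apply_ge hmn A hA σ τ ⟨i - 1, by omega⟩ (by simp only []; omega)]
  rw [OrderEmbedding.lt_iff_lt]
  have e1 : (⟨(i : ℕ) - m, by omega⟩ : Fin (n - m)) = ⟨i - m, by omega⟩ := rfl
  have e2 : (⟨(i : ℕ) - 1 - m, by omega⟩ : Fin (n - m)) = ⟨i - m - 1, by omega⟩ := by
    apply Fin.ext; simp only []; omega
  rw [e2]

lemma descentSet_assemble_erase (hmn : m < n) (hm0 : 0 < m) (A : Finset (Fin n)) (hA : A.card = m)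
    (σ : Equiv.Perm (Fin m)) (τ : Equiv.Perm (Fin (n - m)))
    (S : Finset ℕ) (hS : S ⊆ Finset.Ico 1 n) (hmS : m ∉ S)
    (hσ : descentSet m σ = S.filter (· < m))
    (hτ : descentSet (n - m) τ = (S.filter (fun x => m < x)).image (fun x => x - m)) :
    (descentSet n (assemble hmn A hA σ τ)).erase m = S := by
  ext i
  rw [Finset.mem_erase]
  by_cases hr : 1 ≤ i ∧ i < n
  · obtain ⟨h1, hn⟩ := hr
    rcases lt_trichotomy i m with him | rfl | him
    · rw [descentSet_assemble_lower hmn A hA σ τ h1 him, hσ, Finset.mem_filter]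
      constructor
      · rintro ⟨-, hi, -⟩; exact hi
      · intro hi; exact ⟨by omega, hi, him⟩
    · simp only [ne_eq, not_true_eq_false, false_and, false_iff]
      exact fun hi => hmS hi
    · rw [descentSet_assemble_upper hmn A hA σ τ him hn, hτ, Finset.mem_image]
      constructor
      · rintro ⟨-, ⟨x, hx, hxm⟩⟩
        rw [Finset.mem_filter] at hx
        have : x = i := by omega
        rw [← this]; exact hx.1
      · intro hi
        exact ⟨by omega, ⟨i, Finset.mem_filter.mpr ⟨hi, him⟩, rfl⟩⟩
  · constructor
    · rintro ⟨-, hi⟩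
      have := Finset.mem_Ico.mp (descentSet_subset _ hi)
      omega
    · intro hi
      have := Finset.mem_Ico.mp (hS hi)
      omega

lemma image_assemble (hmn : m < n) (A : Finset (Fin n)) (hA : A.card = m)
    (σ : Equiv.Perm (Fin m)) (τ : Equiv.Perm (Fin (n - m))) :
    Finset.image (fun i : Fin m => assemble hmn A hA σ τ ⟨(i : ℕ), lt_trans i.2 hmn⟩)
      Finset.univ = A := by
  apply Finset.eq_of_subset_of_card_le
  · intro x hx
    rw [Finset.mem_image] at hx
    obtain ⟨i, -, rfl⟩ := hx
    rw [assemble_apply_lt hmn A hA σ τ _ i.2]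
    exact Finset.orderEmbOfFin_mem _ _ _
  · rw [hA, Finset.card_image_of_injective _ ?_, Finset.card_univ, Fintype.card_fin]
    intro i j hij
    have := (assemble hmn A hA σ τ).injective hij
    rw [Fin.mk.injEq] at this
    exact Fin.ext this

lemma assemble_surjective (hmn : m < n) (π : Equiv.Perm (Fin n)) :
    ∃ (A : Finset (Fin n)) (hA : A.card = m) (σ : Equiv.Perm (Fin m))
      (τ : Equiv.Perm (Fin (n - m))), assemble hmn A hA σ τ = π := by
  classical
  have hub : ∀ j : Fin (n - m), m + (j : ℕ) < n := fun j =>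
    (Nat.add_lt_add_left j.2 m).trans_le (le_of_eq (Nat.add_sub_cancel' hmn.le))
  set A : Finset (Fin n) :=
    Finset.image (fun i : Fin m => π ⟨(i : ℕ), lt_trans i.2 hmn⟩) Finset.univ with hAdef
  have hinj1 : Function.Injective (fun i : Fin m => π ⟨(i : ℕ), lt_trans i.2 hmn⟩) := by
    intro i j hij
    have := π.injective hij
    rw [Fin.mk.injEq] at this
    exact Fin.ext this
  have hA : A.card = m := by
    rw [hAdef, Finset.card_image_of_injective _ hinj1, Finset.card_univ, Fintype.card_fin]
  have hmem1 : ∀ i : Fin m, π ⟨(i : ℕ), lt_trans i.2 hmn⟩ ∈ A := by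
    intro i; rw [hAdef, Finset.mem_image]; exact ⟨i, Finset.mem_univ i, rfl⟩
  have hmem2 : ∀ j : Fin (n - m), π ⟨m + (j : ℕ), hub j⟩ ∈ Aᶜ := by
    intro j
    rw [Finset.mem_compl]
    intro hcon
    rw [hAdef, Finset.mem_image] at hcon
    obtain ⟨i, -, hi⟩ := hcon
    have := π.injective hi
    rw [Fin.mk.injEq] at this
    omega
  have hsinj : Function.Injective (fun i : Fin m =>
      (A.orderIsoOfFin hA).symm ⟨π ⟨(i : ℕ), lt_trans i.2 hmn⟩, hmem1 i⟩) := by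
    intro i j hij
    have := (A.orderIsoOfFin hA).symm.injective hij
    rw [Subtype.mk.injEq] at this
    exact hinj1 this
  have htinj : Function.Injective (fun j : Fin (n - m) =>
      (Aᶜ.orderIsoOfFin (card_compl_eq hA)).symm ⟨π ⟨m + (j : ℕ), by omega⟩, hmem2 j⟩) := by
    intro i j hij
    have := (Aᶜ.orderIsoOfFin (card_compl_eq hA)).symm.injective hij
    rw [Subtype.mk.injEq] at this
    have := π.injective this
    rw [Fin.mk.injEq] at this
    exact Fin.ext (by omega)
  refine ⟨A, hA, Equiv.ofBijective _ (Finite.injective_iff_bijective.mp hsinj),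
    Equiv.ofBijective _ (Finite.injective_iff_bijective.mp htinj), ?_⟩
  ext j
  by_cases hj : (j : ℕ) < m
  · rw [assemble_apply_lt _ _ _ _ _ _ hj]
    rw [Equiv.ofBijective_apply]
    rw [← Finset.coe_orderIsoOfFin_apply, OrderIso.apply_symm_apply]
  · rw [assemble_apply_ge _ _ _ _ _ _ hj]
    rw [Equiv.ofBijective_apply]
    rw [← Finset.coe_orderIsoOfFin_apply, OrderIso.apply_symm_apply]
    have hidx : (⟨m + ((⟨(j : ℕ) - m, by have := j.2; omega⟩ : Fin (n - m)) : ℕ), hub _⟩ : Fin n) = j :=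
      Fin.ext (by simp only []; omega)
    exact congrArg (fun x => ((π x : Fin n) : ℕ)) hidx

end Assemble
lemma key_count (n m : ℕ) (hm0 : 0 < m) (hmn : m < n) (S : Finset ℕ)
    (hS : S ⊆ Finset.Ico 1 n) (hmS : m ∉ S) :
    beta n (insert m S) + beta n S
      = n.choose m * (beta m (S.filter (· < m))
          * beta (n - m) ((S.filter (fun x => m < x)).image (fun x => x - m))) := by
  classical
  -- LHS is the cardinality of the set of permutations whose descent set minus {m} is S
  have hsplit : (Finset.univ.filter
        fun π : Equiv.Perm (Fin n) => (descentSet n π).erase m = S)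
      = (Finset.univ.filter fun π : Equiv.Perm (Fin n) => descentSet n π = insert m S)
        ∪ (Finset.univ.filter fun π : Equiv.Perm (Fin n) => descentSet n π = S) := by
    ext π
    simp only [Finset.mem_filter, Finset.mem_univ, true_and, Finset.mem_union]
    constructor
    · intro h
      by_cases hm : m ∈ descentSet n π
      · left; rw [← h, Finset.insert_erase hm]
      · right; rw [← h, Finset.erase_eq_of_notMem hm]
    · rintro (h | h) <;> rw [h]
      · exact Finset.erase_insert hmS
      · exact Finset.erase_eq_of_notMem hmS
  have hdisj : Disjoint
      (Finset.univ.filter fun π : Equiv.Perm (Fin n) => descentSet n π = insert m S)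
      (Finset.univ.filter fun π : Equiv.Perm (Fin n) => descentSet n π = S) := by
    rw [Finset.disjoint_filter]
    intro π _ h1 h2
    rw [h1] at h2
    exact hmS (h2 ▸ Finset.mem_insert_self m S)
  have hLHS : beta n (insert m S) + beta n S = (Finset.univ.filter
      fun π : Equiv.Perm (Fin n) => (descentSet n π).erase m = S).card := by
    rw [hsplit, Finset.card_union_of_disjoint hdisj]; rfl
  rw [hLHS]
  -- RHS as a cardinality
  have hRHS : n.choose m * (beta m (S.filter (· < m))
      * beta (n - m) ((S.filter (fun x => m < x)).image (fun x => x - m)))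
      = ((Finset.powersetCard m (Finset.univ : Finset (Fin n))) ×ˢ
        ((Finset.univ.filter fun σ : Equiv.Perm (Fin m) =>
            descentSet m σ = S.filter (· < m)) ×ˢ
         (Finset.univ.filter fun τ : Equiv.Perm (Fin (n - m)) =>
            descentSet (n - m) τ = (S.filter (fun x => m < x)).image (fun x => x - m)))).card := by
    rw [Finset.card_product, Finset.card_product, Finset.card_powersetCard,
      Finset.card_univ, Fintype.card_fin]
    rfl
  rw [hRHS]
  symm
  apply Finset.card_bij
    (i := fun x hx => assemble hmn x.1
      (by
        rw [Finset.mem_product] at hx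
        exact (Finset.mem_powersetCard_univ.mp hx.1))
      x.2.1 x.2.2)
  · -- maps into the target
    intro x hx
    rw [Finset.mem_product, Finset.mem_product] at hx
    obtain ⟨h1, h2, h3⟩ := hx
    rw [Finset.mem_filter] at h2 h3
    simp only [Finset.mem_filter, Finset.mem_univ, true_and]
    exact descentSet_assemble_erase hmn hm0 _ _ _ _ S hS hmS h2.2 h3.2
  · -- injectivity
    rintro ⟨A, σ, τ⟩ hx ⟨A', σ', τ'⟩ hx' heq
    rw [Finset.mem_product] at hx hx'
    have hA : A.card = m := Finset.mem_powersetCard_univ.mp hx.1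
    have hA' : A'.card = m := Finset.mem_powersetCard_univ.mp hx'.1
    have hAA : A = A' := by
      rw [← image_assemble hmn A hA σ τ, ← image_assemble hmn A' hA' σ' τ']
      rw [heq]
    subst hAA
    have hσ : σ = σ' := by
      ext i
      have happ := congrArg (fun p : Equiv.Perm (Fin n) => p ⟨(i : ℕ), lt_trans i.2 hmn⟩) heq
      simp only [] at happ
      rw [assemble_apply_lt hmn A hA σ τ _ i.2, assemble_apply_lt hmn A hA' σ' τ' _ i.2] at happ
      have := (A.orderEmbOfFin hA).injective happ
      simp only [Fin.eta] at this
      rw [this]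
    have hτ : τ = τ' := by
      ext j
      have hub : m + (j : ℕ) < n :=
        (Nat.add_lt_add_left j.2 m).trans_le (le_of_eq (Nat.add_sub_cancel' hmn.le))
      have happ := congrArg (fun p : Equiv.Perm (Fin n) => p ⟨m + (j : ℕ), hub⟩) heq
      simp only [] at happ
      rw [assemble_apply_ge hmn A hA σ τ _ (by simp only []; omega),
        assemble_apply_ge hmn A hA' σ' τ' _ (by simp only []; omega)] at happ
      have := (Aᶜ.orderEmbOfFin (card_compl_eq hA)).injective happ
      have h2 : (⟨m + (j : ℕ) - m, by omega⟩ : Fin (n - m)) = j := Fin.ext (by simp only []; omega)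
      rw [h2] at this
      rw [this]
    rw [hσ, hτ]
  · -- surjectivity
    intro π hπ
    simp only [Finset.mem_filter, Finset.mem_univ, true_and] at hπ
    obtain ⟨A, hA, σ, τ, hasm⟩ := assemble_surjective hmn π
    refine ⟨⟨A, σ, τ⟩, ?_, hasm⟩
    rw [Finset.mem_product, Finset.mem_product]
    refine ⟨Finset.mem_powersetCard_univ.mpr hA, ?_, ?_⟩
    · rw [Finset.mem_filter]
      refine ⟨Finset.mem_univ _, ?_⟩
      ext i
      by_cases hi : 1 ≤ i ∧ i < m
      · rw [← descentSet_assemble_lower hmn A hA σ τ hi.1 hi.2, hasm, Finset.mem_filter]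
        constructor
        · intro h
          refine ⟨?_, hi.2⟩
          rw [← hπ, Finset.mem_erase]
          exact ⟨by omega, h⟩
        · rintro ⟨h, -⟩
          rw [← hπ, Finset.mem_erase] at h
          exact h.2
      · constructor
        · intro h
          have := Finset.mem_Ico.mp (descentSet_subset _ h)
          omega
        · intro h
          rw [Finset.mem_filter] at h
          have := Finset.mem_Ico.mp (hS h.1)
          omega
    · rw [Finset.mem_filter]
      refine ⟨Finset.mem_univ _, ?_⟩
      ext j
      by_cases hj : 1 ≤ j ∧ j < n - m
      · have hmj1 : m < m + j := by omega
        have hmj2 : m + j < n := by omega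
        have hj' : m + j - m = j := by omega
        rw [show j = m + j - m from hj'.symm,
          ← descentSet_assemble_upper hmn A hA σ τ hmj1 hmj2, hasm]
        rw [Finset.mem_image]
        constructor
        · intro h
          refine ⟨m + j, ?_, rfl⟩
          rw [Finset.mem_filter]
          refine ⟨?_, hmj1⟩
          rw [← hπ, Finset.mem_erase]
          exact ⟨by omega, h⟩
        · rintro ⟨x, hx, hxj⟩
          rw [Finset.mem_filter] at hx
          have hxe : x = m + j := by omega
          subst hxe
          have hmem := hx.1
          rw [← hπ, Finset.mem_erase] at hmem
          exact hmem.2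
      · constructor
        · intro h
          have := Finset.mem_Ico.mp (descentSet_subset _ h)
          omega
        · intro h
          rw [Finset.mem_image] at h
          obtain ⟨x, hx, hxj⟩ := h
          rw [Finset.mem_filter] at hx
          have := Finset.mem_Ico.mp (hS hx.1)
          omega
open Polynomial in
lemma odd_choose_two_pow_sub_one (a j : ℕ) (hj : j < 2 ^ a) :
    Odd ((2 ^ a - 1).choose j) := by
  have key : ((X : Polynomial (ZMod 2)) + 1) ^ (2 ^ a - 1) =
      ∑ i ∈ Finset.range (2 ^ a), (X : Polynomial (ZMod 2)) ^ i := by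
    have hchar : ((X : Polynomial (ZMod 2)) + 1) ^ (2 ^ a) = X ^ (2 ^ a) + 1 := by
      have := add_pow_char_pow (R := Polynomial (ZMod 2)) (p := 2) (x := (X : Polynomial (ZMod 2)))
        (y := 1) (n := a)
      rwa [one_pow] at this
    have hgeom : (∑ i ∈ Finset.range (2 ^ a), (X : Polynomial (ZMod 2)) ^ i) * (X - 1)
        = X ^ (2 ^ a) - 1 := geom_sum_mul X (2 ^ a)
    rw [CharTwo.sub_eq_add, CharTwo.sub_eq_add] at hgeom
    have hpow : ((X : Polynomial (ZMod 2)) + 1) ^ (2 ^ a)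
        = ((X : Polynomial (ZMod 2)) + 1) ^ (2 ^ a - 1) * (X + 1) := by
      rw [← pow_succ]
      congr 1
      have : 0 < 2 ^ a := Nat.pow_pos (by norm_num)
      omega
    apply mul_right_cancel₀ (b := (X : Polynomial (ZMod 2)) + 1)
    · exact (Polynomial.monic_X_add_C (1 : ZMod 2)).ne_zero
    · rw [← hpow, hchar, hgeom]
  have hcoeff := congrArg (fun p => Polynomial.coeff p j) key
  rw [Polynomial.coeff_X_add_one_pow] at hcoeff
  have hsum : (∑ i ∈ Finset.range (2 ^ a), (X : Polynomial (ZMod 2)) ^ i).coeff j = 1 := by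
    rw [Polynomial.finset_sum_coeff]
    simp only [Polynomial.coeff_X_pow]
    rw [Finset.sum_ite_eq (Finset.range (2 ^ a)) j (fun _ => (1 : ZMod 2))]
    simp [Finset.mem_range.mpr hj]
  rw [hsum] at hcoeff
  -- hcoeff : ((2^a - 1).choose j : ZMod 2) = 1
  rw [Nat.odd_iff]
  by_contra h
  have h0 : (2 ^ a - 1).choose j % 2 = 0 := by omega
  obtain ⟨t, ht⟩ : 2 ∣ (2 ^ a - 1).choose j := by omega
  rw [ht, Nat.cast_mul] at hcoeff
  have h2 : ((2 : ℕ) : ZMod 2) = 0 := by decide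
  rw [h2, zero_mul] at hcoeff
  exact absurd hcoeff (by decide)

lemma choose_two_pow_eq (a j : ℕ) (hj1 : 1 ≤ j) (hj2 : j < 2 ^ a) :
    (2 ^ a).choose j * j = 2 ^ a * (2 ^ a - 1).choose (j - 1) := by
  have h := Nat.add_one_mul_choose_eq (2 ^ a - 1) (j - 1)
  have hp : 0 < 2 ^ a := Nat.pow_pos (by norm_num)
  have e1 : 2 ^ a - 1 + 1 = 2 ^ a := by omega
  have e2 : j - 1 + 1 = j := by omega
  rw [e1, e2] at h
  omega

lemma choose_central_two_mul_odd (a : ℕ) (ha : 1 ≤ a) :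
    ∃ D, Odd D ∧ (2 ^ a).choose (2 ^ (a - 1)) = 2 * D := by
  have hlt : 2 ^ (a - 1) < 2 ^ a := Nat.pow_lt_pow_right (by norm_num) (by omega)
  have hpos : 0 < 2 ^ (a - 1) := Nat.pow_pos (by norm_num)
  have h := choose_two_pow_eq a (2 ^ (a - 1)) hpos hlt
  have h2a : 2 ^ a = 2 * 2 ^ (a - 1) := by
    rw [← pow_succ']
    congr 1
    omega
  refine ⟨(2 ^ a - 1).choose (2 ^ (a - 1) - 1), odd_choose_two_pow_sub_one a _ (by omega), ?_⟩
  rw [h2a] at h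
  have := Nat.eq_of_mul_eq_mul_right hpos
    (show (2 ^ a).choose (2 ^ (a - 1)) * 2 ^ (a - 1)
      = (2 * (2 ^ a - 1).choose (2 ^ (a - 1) - 1)) * 2 ^ (a - 1) by
        rw [h2a]; ring_nf; ring_nf at h; omega)
  exact this

lemma dvd_choose_two_pow (a k : ℕ) (hk1 : 1 ≤ k) (hk2 : k < 2 ^ a) :
    ∃ b u, Odd u ∧ k = 2 ^ b * u ∧ b < a ∧
      2 ^ (a - b) ∣ (2 ^ a).choose k := by
  obtain ⟨b, u, hu, rfl⟩ := Nat.exists_eq_two_pow_mul_odd (show k ≠ 0 by omega)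
  have hba : b < a := by
    by_contra hcon
    push_neg at hcon
    have h1 : 2 ^ a ≤ 2 ^ b := Nat.pow_le_pow_right (by norm_num) hcon
    have h2 : 1 ≤ u := hu.pos
    nlinarith [Nat.one_le_two_pow (n := b)]
  refine ⟨b, u, hu, rfl, hba, ?_⟩
  have h := choose_two_pow_eq a (2 ^ b * u) hk1 hk2
  have hD := odd_choose_two_pow_sub_one a (2 ^ b * u - 1) (by omega)
  set C := (2 ^ a).choose (2 ^ b * u) with hC
  set D := (2 ^ a - 1).choose (2 ^ b * u - 1) with hDdef
  -- h : C * (2^b * u) = 2^a * D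
  have hsplit : 2 ^ a = 2 ^ b * 2 ^ (a - b) := by
    rw [← pow_add]
    congr 1
    omega
  have hcancel : C * u = 2 ^ (a - b) * D := by
    have hb0 : 0 < 2 ^ b := Nat.pow_pos (by norm_num)
    apply Nat.eq_of_mul_eq_mul_left hb0
    calc 2 ^ b * (C * u) = C * (2 ^ b * u) := by ring
    _ = 2 ^ a * D := h
    _ = 2 ^ b * (2 ^ (a - b) * D) := by rw [hsplit]; ring
  have hdvd : 2 ^ (a - b) ∣ C * u := ⟨D, hcancel⟩
  have hcop : Nat.Coprime (2 ^ (a - b)) u := Nat.Coprime.pow_left _ (hu.coprime_two_left)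
  exact hcop.dvd_of_dvd_mul_right hdvd

lemma two_dvd_choose_two_pow (a k : ℕ) (hk1 : 1 ≤ k) (hk2 : k < 2 ^ a) :
    2 ∣ (2 ^ a).choose k := by
  obtain ⟨b, u, hu, hk, hba, hdvd⟩ := dvd_choose_two_pow a k hk1 hk2
  exact dvd_trans (dvd_pow_self 2 (by omega : a - b ≠ 0)) hdvd

lemma four_dvd_choose_two_pow (a k : ℕ) (hk1 : 1 ≤ k) (hk2 : k < 2 ^ a)
    (hkne : k ≠ 2 ^ (a - 1)) : 4 ∣ (2 ^ a).choose k := by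
  have ha2 : 2 ≤ a := by
    rcases Nat.lt_or_ge a 2 with h | h
    · interval_cases a
      · norm_num at hk2; omega
      · norm_num at hk2 hkne; omega
    · exact h
  obtain ⟨b, u, hu, hk, hba, hdvd⟩ := dvd_choose_two_pow a k hk1 hk2
  have hb2 : b ≤ a - 2 := by
    by_contra hcon
    push_neg at hcon
    have hbe : b = a - 1 := by omega
    subst hbe
    have h2 : 2 ^ (a - 1) * u < 2 ^ a := hk ▸ hk2
    have h2a : 2 ^ a = 2 ^ (a - 1) * 2 := by rw [← pow_succ]; congr 1; omega
    have hpos : 0 < 2 ^ (a - 1) := Nat.pow_pos (by norm_num)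
    have hu2 : u < 2 := by
      by_contra hcu
      push_neg at hcu
      nlinarith
    interval_cases u
    · exact absurd hu (by decide)
    · rw [mul_one] at hk; exact hkne hk
  refine dvd_trans ?_ hdvd
  have : (4 : ℕ) = 2 ^ 2 := by norm_num
  rw [this]
  exact pow_dvd_pow 2 (by omega)
/-- Toggle membership of `j` in `S`. -/
def toggle (j : ℕ) (S : Finset ℕ) : Finset ℕ :=
  if j ∈ S then S.erase j else insert j S

lemma mem_toggle_iff {j x : ℕ} {S : Finset ℕ} :
    x ∈ toggle j S ↔ (x = j ∧ j ∉ S) ∨ (x ≠ j ∧ x ∈ S) := by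
  rw [toggle]
  by_cases h : j ∈ S
  · rw [if_pos h, Finset.mem_erase]
    constructor
    · rintro ⟨h1, h2⟩; exact Or.inr ⟨h1, h2⟩
    · rintro (⟨rfl, h2⟩ | ⟨h1, h2⟩)
      · exact absurd h h2
      · exact ⟨h1, h2⟩
  · rw [if_neg h, Finset.mem_insert]
    constructor
    · rintro (rfl | h1)
      · exact Or.inl ⟨rfl, h⟩
      · right
        refine ⟨?_, h1⟩
        rintro rfl
        exact h h1
    · rintro (⟨rfl, -⟩ | ⟨-, h1⟩)
      · exact Or.inl rfl
      · exact Or.inr h1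

lemma toggle_toggle (j : ℕ) (S : Finset ℕ) : toggle j (toggle j S) = S := by
  ext x
  simp only [mem_toggle_iff]
  by_cases hx : x = j <;> by_cases hj : j ∈ S <;> simp [hx, hj]

lemma toggle_comm {j l : ℕ} (h : j ≠ l) (S : Finset ℕ) :
    toggle j (toggle l S) = toggle l (toggle j S) := by
  ext x
  simp only [mem_toggle_iff]
  by_cases hxj : x = j <;> by_cases hxl : x = l <;>
    by_cases hj : j ∈ S <;> by_cases hl : l ∈ S <;>
    simp_all [mem_toggle_iff] <;> tauto

lemma toggle_subset {j n : ℕ} {S : Finset ℕ} (hS : S ⊆ Finset.Ico 1 n)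
    (hj : j ∈ Finset.Ico 1 n) : toggle j S ⊆ Finset.Ico 1 n := by
  intro x hx
  rw [mem_toggle_iff] at hx
  rcases hx with ⟨rfl, -⟩ | ⟨-, hx⟩
  · exact hj
  · exact hS hx

lemma mem_toggle_self {j : ℕ} {S : Finset ℕ} : j ∈ toggle j S ↔ j ∉ S := by
  rw [mem_toggle_iff]; simp

lemma mem_toggle_ne {j x : ℕ} {S : Finset ℕ} (h : x ≠ j) : x ∈ toggle j S ↔ x ∈ S := by
  rw [mem_toggle_iff]; simp [h]

lemma beta_toggle_sum (n j : ℕ) (hj0 : 0 < j) (hjn : j < n) (S : Finset ℕ)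
    (hS : S ⊆ Finset.Ico 1 n) :
    ∃ P Q' : Finset ℕ, P ⊆ Finset.Ico 1 j ∧ Q' ⊆ Finset.Ico 1 (n - j) ∧
      beta n (toggle j S) + beta n S = n.choose j * (beta j P * beta (n - j) Q') := by
  by_cases hjS : j ∈ S
  · have hS' : S.erase j ⊆ Finset.Ico 1 n := (Finset.erase_subset j S).trans hS
    have hkc := key_count n j hj0 hjn (S.erase j) hS' (Finset.notMem_erase j S)
    have hins : insert j (S.erase j) = S := Finset.insert_erase hjS
    refine ⟨(S.erase j).filter (· < j),
      ((S.erase j).filter (fun x => j < x)).image (fun x => x - j), ?_, ?_, ?_⟩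
    · intro x hx
      rw [Finset.mem_filter] at hx
      have := Finset.mem_Ico.mp (hS' hx.1)
      rw [Finset.mem_Ico]
      omega
    · intro x hx
      rw [Finset.mem_image] at hx
      obtain ⟨y, hy, rfl⟩ := hx
      rw [Finset.mem_filter] at hy
      have := Finset.mem_Ico.mp (hS' hy.1)
      rw [Finset.mem_Ico]
      omega
    · rw [toggle, if_pos hjS]
      rw [hins] at hkc
      omega
  · have hkc := key_count n j hj0 hjn S hS hjS
    refine ⟨S.filter (· < j), (S.filter (fun x => j < x)).image (fun x => x - j), ?_, ?_, ?_⟩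
    · intro x hx
      rw [Finset.mem_filter] at hx
      have := Finset.mem_Ico.mp (hS hx.1)
      rw [Finset.mem_Ico]
      omega
    · intro x hx
      rw [Finset.mem_image] at hx
      obtain ⟨y, hy, rfl⟩ := hx
      rw [Finset.mem_filter] at hy
      have := Finset.mem_Ico.mp (hS hy.1)
      rw [Finset.mem_Ico]
      omega
    · rw [toggle, if_neg hjS]
      omega

lemma beta_two_pow_odd (b : ℕ) : ∀ c (S : Finset ℕ), S.card ≤ c →
    S ⊆ Finset.Ico 1 (2 ^ b) → Odd (beta (2 ^ b) S) := by
  intro c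
  induction c with
  | zero =>
    intro S hc _
    have : S = ∅ := Finset.card_eq_zero.mp (by omega)
    rw [this, beta_empty]
    exact odd_one
  | succ c ih =>
    intro S hc hS
    rcases S.eq_empty_or_nonempty with rfl | hne
    · rw [beta_empty]; exact odd_one
    obtain ⟨j, hj⟩ := hne
    have hjr := Finset.mem_Ico.mp (hS hj)
    have hb1 : 1 ≤ b := by
      by_contra hcon
      push_neg at hcon
      interval_cases b
      · norm_num at hjr; omega
    obtain ⟨P, Q', hP, hQ', hsum⟩ :=
      beta_toggle_sum (2 ^ b) j (by omega) (by omega) S hS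
    rw [toggle, if_pos hj] at hsum
    have hIH : Odd (beta (2 ^ b) (S.erase j)) := by
      apply ih
      · have := Finset.card_erase_of_mem hj
        omega
      · exact (Finset.erase_subset j S).trans hS
    have heven : 2 ∣ (2 ^ b).choose j := two_dvd_choose_two_pow b j (by omega) (by omega)
    rw [Nat.odd_iff] at hIH ⊢
    obtain ⟨t, ht⟩ := heven
    have h2 : (2 ^ b).choose j * (beta j P * beta (2 ^ b - j) Q')
        = 2 * (t * (beta j P * beta (2 ^ b - j) Q')) := by
      rw [ht]; ring
    omega

open Polynomial in
lemma cyclotomic_dvd_X_pow_add_one (s : ℕ) (hs : 0 < s) :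
    cyclotomic (4 * s) ℤ ∣ (X : ℤ[X]) ^ (2 * s) + 1 := by
  have h4 : (0:ℕ) < 4 * s := by omega
  have h2 : (0:ℕ) < 2 * s := by omega
  have hprod4 := prod_cyclotomic_eq_X_pow_sub_one h4 ℤ
  have hprod2 := prod_cyclotomic_eq_X_pow_sub_one h2 ℤ
  have hsub : (2 * s).divisors ⊆ (4 * s).divisors :=
    Nat.divisors_subset_of_dvd (by omega) ⟨2, by ring⟩
  have hsdiff := Finset.prod_sdiff (f := fun i => cyclotomic i ℤ) hsub
  rw [hprod2, hprod4] at hsdiff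
  have hfactor : ((X : ℤ[X]) ^ (2 * s) + 1) * (X ^ (2 * s) - 1) = X ^ (4 * s) - 1 := by
    have h' : (X : ℤ[X]) ^ (2 * s) * X ^ (2 * s) = X ^ (4 * s) := by
      rw [← pow_add]; congr 1; ring
    rw [← h']; ring
  have hne : ((X : ℤ[X]) ^ (2 * s) - 1) ≠ 0 := by
    intro hcon
    have := congrArg (Polynomial.eval 0) hcon
    simp only [Polynomial.eval_sub, Polynomial.eval_pow, Polynomial.eval_X,
      Polynomial.eval_one, Polynomial.eval_zero] at this
    rw [zero_pow (by omega : 2 * s ≠ 0)] at this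
    norm_num at this
  have hPeq : (∏ i ∈ (4 * s).divisors \ (2 * s).divisors, cyclotomic i ℤ)
      = (X : ℤ[X]) ^ (2 * s) + 1 :=
    mul_right_cancel₀ hne (by rw [hsdiff, hfactor])
  rw [← hPeq]
  apply Finset.dvd_prod_of_mem
  rw [Finset.mem_sdiff]
  constructor
  · exact Nat.mem_divisors_self _ (by omega)
  · intro hcon
    have := (Nat.mem_divisors.mp hcon).1
    have := Nat.le_of_dvd h2 this
    omega

open Polynomial in
lemma cyclotomic_dvd_pair (s b c : ℕ) (hs : 0 < s) (w : ℤ) (hw : Odd w)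
    (h : (b : ℤ) - (c : ℤ) = 2 * s * w) :
    cyclotomic (4 * s) ℤ ∣ (X : ℤ[X]) ^ b + X ^ c := by
  have base : ∀ (c' : ℕ) (u : ℕ), Odd u →
      cyclotomic (4 * s) ℤ ∣ (X : ℤ[X]) ^ (c' + 2 * s * u) + X ^ c' := by
    intro c' u hu
    have h1 : (X : ℤ[X]) ^ (c' + 2 * s * u) + X ^ c'
        = X ^ c' * ((X ^ (2 * s)) ^ u + 1) := by
      rw [pow_add, ← pow_mul]
      ring
    rw [h1]
    apply Dvd.dvd.mul_left
    have h2 : ((X : ℤ[X]) ^ (2 * s)) ^ u + 1 = (X ^ (2 * s)) ^ u - (-1) ^ u := by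
      rw [hu.neg_one_pow]
      ring
    rw [h2]
    exact dvd_trans (by rw [sub_neg_eq_add]; exact cyclotomic_dvd_X_pow_add_one s hs)
      (sub_dvd_pow_sub_pow _ _ u)
  rcases le_total c b with hcb | hcb
  · have hcb' : (c : ℤ) ≤ b := by exact_mod_cast hcb
    have hw0 : 0 ≤ w := by
      by_contra hcon
      push_neg at hcon
      have hneg : (2 : ℤ) * s * w < 0 :=
        mul_neg_of_pos_of_neg (by positivity) hcon
      linarith
    have hu : Odd w.toNat := by
      rw [← Int.odd_coe_nat, Int.toNat_of_nonneg hw0]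
      exact hw
    have hbc : b = c + 2 * s * w.toNat := by
      have ht : (w.toNat : ℤ) = w := Int.toNat_of_nonneg hw0
      have hcast : (b : ℤ) = c + 2 * s * (w.toNat : ℤ) := by rw [ht]; linarith
      exact_mod_cast hcast
    rw [hbc]
    exact base c w.toNat hu
  · have hcb' : (b : ℤ) ≤ c := by exact_mod_cast hcb
    have hw0 : 0 ≤ -w := by
      by_contra hcon
      push_neg at hcon
      have hpos : (0:ℤ) < 2 * s * w := mul_pos (by positivity) (by linarith)
      linarith
    have hu : Odd (-w).toNat := by
      rw [← Int.odd_coe_nat, Int.toNat_of_nonneg hw0]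
      exact hw.neg
    have hbc : c = b + 2 * s * (-w).toNat := by
      have ht : ((-w).toNat : ℤ) = -w := Int.toNat_of_nonneg hw0
      have hcast : (c : ℤ) = b + 2 * s * ((-w).toNat : ℤ) := by rw [ht]; linarith
      exact_mod_cast hcast
    rw [hbc, add_comm ((X : ℤ[X]) ^ b)]
    exact base b (-w).toNat hu

/-- For `n = 2^a` with `a ≥ 2` and `s` an odd positive integer dividing the
central binomial coefficient `C(n, n/2)` as well as `C(n, k)` for some
`1 ≤ k ≤ n-1` with `k ≠ n/2`, the cyclotomic polynomial `Φ_{4s}` divides the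
descent set polynomial `Q_n(t)`. -/
theorem cyclotomic_four_s_dvd (a s k : ℕ) (ha : 2 ≤ a) (hs : 0 < s) (hsodd : Odd s)
    (hcentral : s ∣ (2 ^ a).choose (2 ^ a / 2))
    (hk1 : 1 ≤ k) (hk2 : k ≤ 2 ^ a - 1) (hkne : k ≠ 2 ^ a / 2)
    (hk : s ∣ (2 ^ a).choose k) :
    Polynomial.cyclotomic (4 * s) ℤ ∣ Q (2 ^ a) := by

  classical
  have hdiv : 2 ^ a / 2 = 2 ^ (a - 1) := by
    have h : 2 ^ a = 2 ^ (a - 1) * 2 := by rw [← pow_succ]; congr 1; omega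
    rw [h, Nat.mul_div_cancel _ (by norm_num)]
  rw [hdiv] at hcentral hkne
  set n := 2 ^ a with hn
  set m := 2 ^ (a - 1) with hm
  have hm0 : 0 < m := Nat.pow_pos (by norm_num)
  have hmn : m < n := Nat.pow_lt_pow_right (by norm_num) (by omega)
  have hn2m : n = 2 * m := by rw [hn, hm, ← pow_succ']; congr 1; omega
  have hn0 : 0 < n := Nat.pow_pos (by norm_num)
  have hkn : k < n := by omega
  have hk0 : 0 < k := hk1
  have hkm : k ≠ m := hkne
  obtain ⟨D, hD, hCm⟩ := choose_central_two_mul_odd a (by omega)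
  have h4k : 4 ∣ n.choose k := four_dvd_choose_two_pow a k hk1 hkn hkm
  have hcop4s : Nat.Coprime 4 s := by
    have h2 : Nat.Coprime 2 s := Nat.coprime_two_left.mpr hsodd
    have : (4 : ℕ) = 2 ^ 2 := by norm_num
    rw [this]
    exact Nat.Coprime.pow_left 2 h2
  have h4sk : 4 * s ∣ n.choose k := Nat.Coprime.mul_dvd_of_dvd_of_dvd hcop4s h4k hk
  have hmmem : m ∈ Finset.Ico 1 n := Finset.mem_Ico.mpr ⟨by omega, hmn⟩
  have hkmem : k ∈ Finset.Ico 1 n := Finset.mem_Ico.mpr ⟨hk1, hkn⟩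
  suffices hQ : Q n ∈ Ideal.span {Polynomial.cyclotomic (4 * s) ℤ} by
    rwa [Ideal.mem_span_singleton] at hQ
  rw [← Ideal.Quotient.eq_zero_iff_mem]
  unfold Q
  rw [map_sum]
  refine Finset.sum_involution (fun S _ => toggle k (toggle m S)) ?_ ?_ ?_ ?_
  · -- paired terms cancel
    intro S hSmem
    rw [Finset.mem_powerset] at hSmem
    rw [← map_add, Ideal.Quotient.eq_zero_iff_mem, Ideal.mem_span_singleton]
    obtain ⟨P1, Q1, hP1, hQ1, e1⟩ := beta_toggle_sum n m hm0 hmn S hSmem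
    have hnm : n - m = m := by omega
    rw [hnm] at hQ1 e1
    have hodd1 : Odd (beta m P1) := beta_two_pow_odd (a - 1) P1.card P1 le_rfl hP1
    have hodd2 : Odd (beta m Q1) := beta_two_pow_odd (a - 1) Q1.card Q1 le_rfl hQ1
    have hu_odd : Odd (D * (beta m P1 * beta m Q1)) := hD.mul (hodd1.mul hodd2)
    have e1' : beta n (toggle m S) + beta n S = 2 * (D * (beta m P1 * beta m Q1)) := by
      rw [e1, hCm]; ring
    have hs1 : s ∣ 2 * (D * (beta m P1 * beta m Q1)) := by
      rw [← e1', e1]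
      exact Dvd.dvd.mul_right hcentral _
    have hsu : s ∣ D * (beta m P1 * beta m Q1) :=
      (Nat.coprime_two_right.mpr hsodd).dvd_of_dvd_mul_left hs1
    obtain ⟨u', hu'⟩ := hsu
    have hu'odd : Odd u' := (Nat.odd_mul.mp (hu' ▸ hu_odd)).2
    have hsum1 : beta n (toggle m S) + beta n S = 2 * (s * u') := by rw [e1', hu']
    have hTm : toggle m S ⊆ Finset.Ico 1 n := toggle_subset hSmem hmmem
    obtain ⟨P2, Q2, -, -, e2⟩ := beta_toggle_sum n k hk0 hkn (toggle m S) hTm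
    obtain ⟨v, hv⟩ : 4 * s ∣ beta n (toggle k (toggle m S)) + beta n (toggle m S) := by
      rw [e2]; exact Dvd.dvd.mul_right h4sk _
    have hwodd : Odd ((u' : ℤ) - 2 * v) := by
      refine Odd.sub_even ?_ ⟨(v : ℤ), by ring⟩
      exact_mod_cast hu'odd
    apply cyclotomic_dvd_pair s _ _ hs ((u' : ℤ) - 2 * (v : ℤ)) hwodd
    have c1 : (beta n (toggle m S) : ℤ) + (beta n S : ℤ) = 2 * ((s : ℤ) * u') := by
      exact_mod_cast hsum1
    have c2 : (beta n (toggle k (toggle m S)) : ℤ) + (beta n (toggle m S) : ℤ)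
        = 4 * (s : ℤ) * v := by exact_mod_cast hv
    ring_nf
    ring_nf at c1 c2
    linarith
  · -- no fixed points
    intro S hSmem _
    intro hcon
    change toggle k (toggle m S) = S at hcon
    have h1 : k ∈ toggle k (toggle m S) ↔ k ∉ toggle m S := mem_toggle_self
    have h2 : k ∈ toggle m S ↔ k ∈ S := mem_toggle_ne hkm
    rw [hcon] at h1
    tauto
  · -- closed under the involution
    intro S hSmem
    rw [Finset.mem_powerset] at hSmem ⊢
    exact toggle_subset (toggle_subset hSmem hmmem) hkmem
  · -- involutive
    intro S hSmem
    have hmk : m ≠ k := fun h => hkm h.symm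
    show toggle k (toggle m (toggle k (toggle m S))) = S
    rw [toggle_comm hmk (toggle m S), toggle_toggle, toggle_toggle]
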